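/- arXiv:2501.16499 — 2 statements merged into one kernel-verified Lean document; each statement's English description precedes it below -/
import Mathlib

section
/- If u ∈ H²(D; ℝ³) with |u(x)| = 1 a.e. on an interval D, then ‖∂ₓ²u‖²_{L²} = ‖u × ∂ₓ²u‖²_{L²} + ‖∂ₓu‖⁴_{L⁴}. -/
open Matrix MeasureTheory Set

private lemma hasDerivAt_dot {f g : ℝ → Fin 3 → ℝ} {f' g' : Fin 3 → ℝ} {x : ℝ}
    (hf : HasDerivAt f f' x) (hg : HasDerivAt g g' x) :
    HasDerivAt (fun y => f y ⬝ᵥ g y) (f' ⬝ᵥ g x + f x ⬝ᵥ g') x := by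
  have hfi : ∀ i, HasDerivAt (fun y => f y i) (f' i) x := fun i => by
    exact hasDerivAt_pi.1 hf i
  have hgi : ∀ i, HasDerivAt (fun y => g y i) (g' i) x := fun i => by
    exact hasDerivAt_pi.1 hg i
  have h : HasDerivAt (fun y => ∑ i, f y i * g y i)
      (∑ i : Fin 3, (f' i * g x i + f x i * g' i)) x :=
    HasDerivAt.fun_sum fun i _ => (hfi i).mul (hgi i)
  simpa [dotProduct, Finset.sum_add_distrib] using h

/-- If `u ∈ H²(D; ℝ³)` with `|u(x)| = 1` a.e. on an interval `D`, then
`‖∂ₓ²u‖²_{L²} = ‖u × ∂ₓ²u‖²_{L²} + ‖∂ₓu‖⁴_{L⁴}`. -/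
theorem energy_identity (a b : ℝ) (hab : a < b) (u u' u'' : ℝ → (Fin 3 → ℝ))
    (hderiv : ∀ x ∈ Ioo a b, HasDerivAt u (u' x) x)
    (hderiv' : ∀ x ∈ Ioo a b, HasDerivAt u' (u'' x) x)
    (hu2 : MemLp u 2 (volume.restrict (Ioo a b)))
    (hu'2 : MemLp u' 2 (volume.restrict (Ioo a b)))
    (hu''2 : MemLp u'' 2 (volume.restrict (Ioo a b)))
    (hunit : ∀ᵐ x ∂(volume.restrict (Ioo a b)), u x ⬝ᵥ u x = 1) :
    ∫ x in Ioo a b, u'' x ⬝ᵥ u'' x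
      = (∫ x in Ioo a b, (crossProduct (u x) (u'' x)) ⬝ᵥ (crossProduct (u x) (u'' x)))
        + ∫ x in Ioo a b, (u' x ⬝ᵥ u' x) ^ 2 := by
  set μ := volume.restrict (Ioo a b) with hμ
  -- unit norm everywhere on the open interval
  have hunit' : ∀ x ∈ Ioo a b, u x ⬝ᵥ u x = 1 := by
    by_contra hcon
    push_neg at hcon
    obtain ⟨x₀, hx₀, hne⟩ := hcon
    have hcontu : ContinuousOn u (Ioo a b) := fun x hx =>
      ((hderiv x hx).continuousAt).continuousWithinAt
    have hcontf : ContinuousOn (fun x => u x ⬝ᵥ u x) (Ioo a b) := by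
      simp only [dotProduct]
      exact continuousOn_finset_sum _ fun i _ =>
        ((continuous_apply i).comp_continuousOn hcontu).mul
          ((continuous_apply i).comp_continuousOn hcontu)
    have hopen : IsOpen (Ioo a b ∩ (fun x => u x ⬝ᵥ u x) ⁻¹' {(1:ℝ)}ᶜ) :=
      hcontf.isOpen_inter_preimage isOpen_Ioo (isOpen_compl_iff.2 isClosed_singleton)
    have hnull : volume (Ioo a b ∩ (fun x => u x ⬝ᵥ u x) ⁻¹' {(1:ℝ)}ᶜ) = 0 := by
      have := (ae_restrict_iff' measurableSet_Ioo).1 hunit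
      rw [ae_iff] at this
      refine measure_mono_null (fun x hx => ?_) this
      obtain ⟨hx1, hx2⟩ := hx
      simp only [mem_setOf_eq]
      exact fun h => hx2 (h hx1)
    have hmem : x₀ ∈ Ioo a b ∩ (fun x => u x ⬝ᵥ u x) ⁻¹' {(1:ℝ)}ᶜ := ⟨hx₀, hne⟩
    have := hopen.measure_pos volume ⟨x₀, hmem⟩
    exact absurd hnull this.ne'
  -- u ⬝ u' = 0 on Ioo
  have horth : ∀ x ∈ Ioo a b, u x ⬝ᵥ u' x = 0 := by
    intro x hx
    have hd : HasDerivAt (fun y => u y ⬝ᵥ u y) (u' x ⬝ᵥ u x + u x ⬝ᵥ u' x) x :=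
      hasDerivAt_dot (hderiv x hx) (hderiv x hx)
    have heq : (fun y => u y ⬝ᵥ u y) =ᶠ[nhds x] fun _ => (1:ℝ) := by
      filter_upwards [isOpen_Ioo.mem_nhds hx] with y hy using hunit' y hy
    have hzero : HasDerivAt (fun y => u y ⬝ᵥ u y) 0 x :=
      (hasDerivAt_const x (1:ℝ)).congr_of_eventuallyEq heq
    have := hd.unique hzero
    have hcomm : u' x ⬝ᵥ u x = u x ⬝ᵥ u' x := dotProduct_comm _ _
    linarith [this, hcomm]
  -- u ⬝ u'' = -(u' ⬝ u') on Ioo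
  have hkey : ∀ x ∈ Ioo a b, u x ⬝ᵥ u'' x = -(u' x ⬝ᵥ u' x) := by
    intro x hx
    have hd : HasDerivAt (fun y => u y ⬝ᵥ u' y) (u' x ⬝ᵥ u' x + u x ⬝ᵥ u'' x) x :=
      hasDerivAt_dot (hderiv x hx) (hderiv' x hx)
    have heq : (fun y => u y ⬝ᵥ u' y) =ᶠ[nhds x] fun _ => (0:ℝ) := by
      filter_upwards [isOpen_Ioo.mem_nhds hx] with y hy using horth y hy
    have hzero : HasDerivAt (fun y => u y ⬝ᵥ u' y) 0 x :=
      (hasDerivAt_const x (0:ℝ)).congr_of_eventuallyEq heq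
    have := hd.unique hzero
    linarith
  -- pointwise identity on Ioo
  have hpt : ∀ x ∈ Ioo a b,
      u'' x ⬝ᵥ u'' x = (crossProduct (u x) (u'' x)) ⬝ᵥ (crossProduct (u x) (u'' x))
        + (u' x ⬝ᵥ u' x) ^ 2 := by
    intro x hx
    have h1 := cross_dot_cross (u x) (u'' x) (u x) (u'' x)
    rw [h1, hunit' x hx, hkey x hx, dotProduct_comm (u'' x) (u x), hkey x hx]
    ring
  -- integrability of u'' ⬝ u''
  have hcomp : ∀ (v : ℝ → Fin 3 → ℝ), MemLp v 2 μ → ∀ i : Fin 3,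
      MemLp (fun x => v x i) 2 μ := fun v hv i =>
    (ContinuousLinearMap.proj (R := ℝ) (φ := fun _ : Fin 3 => ℝ) i).comp_memLp' hv
  have hIf : Integrable (fun x => u'' x ⬝ᵥ u'' x) μ := by
    have : Integrable (fun x => ∑ i : Fin 3, (u'' x i) ^ 2) μ :=
      integrable_finset_sum _ fun i _ => (hcomp u'' hu''2 i).integrable_sq
    simpa [dotProduct, sq] using this
  -- integrability of (u' ⬝ u')^2 : continuous on Ioo and dominated by u'' ⬝ u''
  have hcontu' : ContinuousOn u' (Ioo a b) := fun x hx =>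
    ((hderiv' x hx).continuousAt).continuousWithinAt
  have hmeas_h : AEStronglyMeasurable (fun x => (u' x ⬝ᵥ u' x) ^ 2) μ := by
    apply ContinuousOn.aestronglyMeasurable _ measurableSet_Ioo
    apply ContinuousOn.pow
    simp only [dotProduct]
    exact continuousOn_finset_sum _ fun i _ =>
      ((continuous_apply i).comp_continuousOn hcontu').mul
        ((continuous_apply i).comp_continuousOn hcontu')
  have hbound : ∀ᵐ x ∂μ, ‖(u' x ⬝ᵥ u' x) ^ 2‖ ≤ u'' x ⬝ᵥ u'' x := by
    rw [hμ, ae_restrict_iff' measurableSet_Ioo]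
    filter_upwards with x hx
    have h1 := hpt x hx
    have h2 : 0 ≤ (crossProduct (u x) (u'' x)) ⬝ᵥ (crossProduct (u x) (u'' x)) :=
      Finset.sum_nonneg fun i _ => mul_self_nonneg _
    have h3 : (0:ℝ) ≤ (u' x ⬝ᵥ u' x) ^ 2 := sq_nonneg _
    rw [Real.norm_of_nonneg h3]
    linarith
  have hIh : Integrable (fun x => (u' x ⬝ᵥ u' x) ^ 2) μ :=
    Integrable.mono' hIf hmeas_h hbound
  -- integrability of the cross term
  have heq_ae : (fun x => u'' x ⬝ᵥ u'' x) =ᵐ[μ]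
      fun x => (crossProduct (u x) (u'' x)) ⬝ᵥ (crossProduct (u x) (u'' x))
        + (u' x ⬝ᵥ u' x) ^ 2 := by
    rw [hμ, Filter.EventuallyEq, ae_restrict_iff' measurableSet_Ioo]
    filter_upwards with x hx using hpt x hx
  have hIg : Integrable
      (fun x => (crossProduct (u x) (u'' x)) ⬝ᵥ (crossProduct (u x) (u'' x))) μ := by
    have : Integrable (fun x => (u'' x ⬝ᵥ u'' x) - (u' x ⬝ᵥ u' x) ^ 2) μ := hIf.sub hIh
    apply this.congr
    rw [hμ, Filter.EventuallyEq, ae_restrict_iff' measurableSet_Ioo]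
    filter_upwards with x hx
    have := hpt x hx; linarith
  calc ∫ x in Ioo a b, u'' x ⬝ᵥ u'' x
      = ∫ x in Ioo a b, ((crossProduct (u x) (u'' x)) ⬝ᵥ (crossProduct (u x) (u'' x))
          + (u' x ⬝ᵥ u' x) ^ 2) := integral_congr_ae heq_ae
    _ = (∫ x in Ioo a b, (crossProduct (u x) (u'' x)) ⬝ᵥ (crossProduct (u x) (u'' x)))
          + ∫ x in Ioo a b, (u' x ⬝ᵥ u' x) ^ 2 := integral_add hIg hIh
end

section
/- For every v ∈ ℝ³ and real scalar c, letting Γ(v) be the matrix with Γ(v)w = c(v × w), the vector C(v) with components Cⁱ(v) = Σ_{j,k} (∂Γ^{i,k}/∂v^j)(v) Γ^{j,k}(v) equals -2c² v. -/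
open Matrix

lemma gamma_entry (c : ℝ) (Γ : (Fin 3 → ℝ) → Matrix (Fin 3) (Fin 3) ℝ)
    (hΓ : ∀ v w : Fin 3 → ℝ, (Γ v).mulVec w = c • crossProduct v w)
    (w : Fin 3 → ℝ) (i k : Fin 3) :
    Γ w i k = c * (![![0, -w 2, w 1], ![w 2, 0, -w 0], ![-w 1, w 0, 0]] i k) := by
  have h := congrFun (hΓ w (Pi.single k 1)) i
  simp only [Matrix.mulVec_single, mul_one, MulOpposite.op_one, one_smul, Matrix.col_apply] at h
  rw [h]
  fin_cases i <;> fin_cases k <;>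
    simp [crossProduct, Pi.single_apply]

/-- For `v ∈ ℝ³` and `c ∈ ℝ`, with `Γ(v)` the matrix with `Γ(v) w = c (v × w)`, the
Itô–Stratonovich correction vector `Cⁱ(v) = Σ_{j,k} (∂Γ^{i,k}/∂v^j)(v) Γ^{j,k}(v)`
equals `-2 c² v`. -/
theorem ito_stratonovich_correction (c : ℝ) (Γ : (Fin 3 → ℝ) → Matrix (Fin 3) (Fin 3) ℝ)
    (hΓ : ∀ v w : Fin 3 → ℝ, (Γ v).mulVec w = c • crossProduct v w) (v : Fin 3 → ℝ) :
    (fun i : Fin 3 => ∑ j : Fin 3, ∑ k : Fin 3,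
        deriv (fun s : ℝ => Γ (Function.update v j s) i k) (v j) * Γ v j k)
      = (-(2 * c ^ 2)) • v := by
  have hd : ∀ x : ℝ, deriv (fun s : ℝ => c * s) x = c := fun x => by simpa using deriv_const_mul c (differentiableAt_id' (𝕜 := ℝ) (x := x))
  funext i
  simp only [Fin.sum_univ_three, gamma_entry c Γ hΓ, Pi.smul_apply, smul_eq_mul]
  fin_cases i <;>
    simp [Function.update_apply, deriv_const_mul_field, hd, Matrix.cons_val_zero,
      Matrix.cons_val_one, Matrix.head_cons] <;> ring
end
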